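/- (Lemma 4, support of the block permutation probabilities) Assume (A1), (B1) and (B2) with constant r, and let α ∈ (0,1). Define μ_b(w) = P*( p^(b)(W) > c(α) )(w) for b = 1, …, B. Then for every w ∈ 𝒲 and every b, 1 − log(1/(1−α)) · r² · m_B / B ≤ μ_b(w) ≤ 1; in particular, the support of the distribution of μ_b(W) is contained in the interval [1 − log(1/(1−α)) r² m_B B^{-1}, 1]. -/

import Mathlib

open scoped ENNReal

noncomputable section

/-- A multiple-testing framework with `m` hypotheses: data space `Ω` with distribution `Q`,
`p`-values `p j` taking values in the finite set `S ⊆ [0,1]`, set of true nulls `I`,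
a finite group `G` of measurable bijections of the data space, and a partition
`A 1, …, A B` of the hypotheses into blocks, each containing a true null. -/
structure Framework (m : ℕ) where
  Ω : Type
  [meas : MeasurableSpace Ω]
  Q : MeasureTheory.Measure Ω
  Qprob : MeasureTheory.IsProbabilityMeasure Q
  S : Finset ℝ
  hS : ∀ s ∈ S, 0 ≤ s ∧ s ≤ 1
  p : Fin m → Ω → ℝ
  p_meas : ∀ j, Measurable (p j)
  p_mem : ∀ j w, p j w ∈ S
  I : Finset (Fin m)
  G : Finset (Ω ≃ᵐ Ω)
  G_one : MeasurableEquiv.refl Ω ∈ G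
  G_mul : ∀ g ∈ G, ∀ g' ∈ G, g.trans g' ∈ G
  G_inv : ∀ g ∈ G, g.symm ∈ G
  B : ℕ
  B_pos : 0 < B
  A : Fin B → Finset (Fin m)
  A_disj : ∀ b b', b ≠ b' → Disjoint (A b) (A b')
  A_cover : ∀ j, ∃ b, j ∈ A b
  A_I : ∀ b, (A b ∩ I).Nonempty

attribute [instance] Framework.meas Framework.Qprob

open MeasureTheory ProbabilityTheory Filter

namespace Framework

variable {m : ℕ} (F : Framework m)

/-- Minimum of the `p`-values over the index set `J` (`1` by convention if `J = ∅`). -/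
def fmin (J : Finset (Fin m)) (w : F.Ω) : ℝ :=
  if h : J.Nonempty then J.inf' h (fun j => F.p j w) else 1

/-- `min_{j ∈ I} p_j(w)`, the minimal `p`-value over the true null hypotheses. -/
def nullMin : F.Ω → ℝ := F.fmin F.I

/-- `min_{1 ≤ j ≤ m} p_j(w)`, the minimal `p`-value over all hypotheses. -/
def fullMin : F.Ω → ℝ := F.fmin Finset.univ

/-- `p^(b)(w) = min_{j ∈ A_b ∩ I} p_j(w)`, the minimal null `p`-value in block `b`. -/
def blockMin (b : Fin F.B) : F.Ω → ℝ := F.fmin (F.A b ∩ F.I)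

/-- The permutation probability `P*(E)(w) = |G|⁻¹ ∑_{g ∈ G} 1{g w ∈ E}`. -/
def Pstar (E : Set F.Ω) (w : F.Ω) : ℝ :=
  (F.G.card : ℝ)⁻¹ * ∑ g ∈ F.G, E.indicator (fun _ => (1 : ℝ)) (g w)

/-- The oracle threshold `c(α) = max {s ∈ S : Q(min_{j ∈ I} p_j(W) ≤ s) ≤ α}`,
with `max ∅ := 0`. -/
def oracle (α : ℝ) : ℝ :=
  WithBot.unbotD 0 ((F.S.filter (fun s => (F.Q {w | F.nullMin w ≤ s}).toReal ≤ α)).max)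

/-- The single-step Westfall--Young threshold
`ĉ(α)(w) = max {s ∈ S : P*(min_{1≤j≤m} p_j(W) ≤ s)(w) ≤ α}`, with `max ∅ := 0`. -/
def wy (α : ℝ) (w : F.Ω) : ℝ :=
  WithBot.unbotD 0 ((F.S.filter (fun s => F.Pstar {w' | F.fullMin w' ≤ s} w ≤ α)).max)

/-- The maximal block size `m_B = max_b |A_b|`. -/
def mB : ℕ := Finset.univ.sup (fun b : Fin F.B => (F.A b).card)

/-- `π_b(c) = Q(p^(b)(W) ≤ c)`. -/
def piB (b : Fin F.B) (c : ℝ) : ℝ := (F.Q {w | F.blockMin b w ≤ c}).toReal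

/-- Assumption (A1): for every pair `g, g' ∈ G`, the random variables
`min (p^(b)(gW)) (p^(b)(g'W))`, `b = 1, …, B`, are mutually independent under `Q`. -/
def A1 : Prop :=
  ∀ g ∈ F.G, ∀ g' ∈ F.G,
    iIndepFun
      (fun b : Fin F.B => fun w => min (F.blockMin b (g w)) (F.blockMin b (g' w))) F.Q

/-- Assumption (B1): for `G` uniformly distributed on the permutation group and independent
of `W`, the joint distribution of `(p_j(GW))_{j ∈ I}` equals that of `(p_j(W))_{j ∈ I}`;
expressed as an equality between the uniform mixture of the pushforwards and the
pushforward of `Q` itself. -/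
def B1 : Prop :=
  (F.G.card : ℝ≥0∞)⁻¹ •
      (∑ g ∈ F.G, Measure.map (fun w => fun j : F.I => F.p j (g w)) F.Q)
    = Measure.map (fun w => fun j : F.I => F.p j w) F.Q

/-- Assumption (B2) with constant `r`:
`r⁻¹ s ≤ P*(p_j(W) ≤ s)(w) ≤ r s` for all `j`, all `s ∈ S` and all `w`. -/
def B2 (r : ℝ) : Prop :=
  ∀ j : Fin m, ∀ s ∈ F.S, ∀ w : F.Ω,
    r⁻¹ * s ≤ F.Pstar {w' | F.p j w' ≤ s} w ∧ F.Pstar {w' | F.p j w' ≤ s} w ≤ r * s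

/-- Assumption (B3): null `p`-values are uniformly distributed on `S`:
`Q(p_j(W) ≤ s) = s` for all `j ∈ I`, `s ∈ S`. -/
def B3 : Prop :=
  ∀ j ∈ F.I, ∀ s ∈ F.S, (F.Q {w | F.p j w ≤ s}).toReal = s

end Framework

namespace Framework

variable {m : ℕ} (F : Framework m)

lemma G_card_pos : 0 < F.G.card := Finset.card_pos.2 ⟨_, F.G_one⟩

lemma ind_nonneg (E : Set F.Ω) (x : F.Ω) : 0 ≤ E.indicator (fun _ => (1:ℝ)) x :=
  Set.indicator_nonneg (fun _ _ => zero_le_one) x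

lemma ind_le_one (E : Set F.Ω) (x : F.Ω) : E.indicator (fun _ => (1:ℝ)) x ≤ 1 := by
  classical
  by_cases h : x ∈ E <;> simp [Set.indicator_apply, h]

lemma Pstar_nonneg (E : Set F.Ω) (w : F.Ω) : 0 ≤ F.Pstar E w :=
  mul_nonneg (by positivity) (Finset.sum_nonneg fun g _ => F.ind_nonneg E _)

lemma Pstar_le_one (E : Set F.Ω) (w : F.Ω) : F.Pstar E w ≤ 1 := by
  have hc : (0:ℝ) < F.G.card := by exact_mod_cast F.G_card_pos
  have h : ∑ g ∈ F.G, E.indicator (fun _ => (1:ℝ)) (g w) ≤ (F.G.card : ℝ) := by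
    calc ∑ g ∈ F.G, E.indicator (fun _ => (1:ℝ)) (g w) ≤ ∑ _g ∈ F.G, (1:ℝ) :=
          Finset.sum_le_sum fun g _ => F.ind_le_one E _
      _ = F.G.card := by simp
  calc F.Pstar E w ≤ (F.G.card:ℝ)⁻¹ * F.G.card :=
        mul_le_mul_of_nonneg_left h (by positivity)
    _ = 1 := inv_mul_cancel₀ hc.ne'

lemma Pstar_compl (E : Set F.Ω) (w : F.Ω) : F.Pstar Eᶜ w = 1 - F.Pstar E w := by
  classical
  have hc : (0:ℝ) < F.G.card := by exact_mod_cast F.G_card_pos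
  have h : ∀ x : F.Ω, Eᶜ.indicator (fun _ => (1:ℝ)) x = 1 - E.indicator (fun _ => (1:ℝ)) x := by
    intro x; by_cases hx : x ∈ E <;> simp [Set.indicator_apply, hx]
  simp only [Pstar, h, Finset.sum_sub_distrib, Finset.sum_const, nsmul_eq_mul, mul_one,
    mul_sub]
  rw [inv_mul_cancel₀ hc.ne']

lemma fmin_le_iff {J : Finset (Fin m)} (hJ : J.Nonempty) {w : F.Ω} {c : ℝ} :
    F.fmin J w ≤ c ↔ ∃ j ∈ J, F.p j w ≤ c := by
  rw [fmin, dif_pos hJ]; exact Finset.inf'_le_iff hJ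

lemma fmin_mem {J : Finset (Fin m)} (hJ : J.Nonempty) (w : F.Ω) : F.fmin J w ∈ F.S := by
  rw [fmin, dif_pos hJ]
  obtain ⟨j, _, hje⟩ := Finset.exists_mem_eq_inf' hJ (fun j => F.p j w)
  rw [hje]; exact F.p_mem j w

end Framework

/-- **Lemma 4 (support of the block permutation probabilities).** Under (A1), (B1) and
(B2) with constant `r`, for `α ∈ (0,1)` and `μ_b(w) = P*(p^(b)(W) > c(α))(w)`:
`1 − log(1/(1−α))·r²·m_B/B ≤ μ_b(w) ≤ 1` for every `w` and every block `b`. -/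
theorem lemma4_support_block_permutation_prob
    {m : ℕ} (F : Framework m) (r : ℝ)
    (hA1 : F.A1) (hB1 : F.B1) (hB2 : F.B2 r)
    (α : ℝ) (hα : α ∈ Set.Ioo (0 : ℝ) 1) :
    ∀ (b : Fin F.B) (w : F.Ω),
      1 - Real.log (1 / (1 - α)) * r ^ 2 * (F.mB : ℝ) / (F.B : ℝ)
          ≤ F.Pstar {w' | F.oracle α < F.blockMin b w'} w ∧
      F.Pstar {w' | F.oracle α < F.blockMin b w'} w ≤ 1 := by
  classical
  obtain ⟨hα0, hα1⟩ := hα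
  set c := F.oracle α with hc_def
  set L := Real.log (1 / (1 - α)) with hL_def
  have h1α : 0 < 1 - α := by linarith
  have hL0 : 0 ≤ L := Real.log_nonneg (by rw [le_div_iff₀ h1α]; linarith)
  have hGpos : (0:ℝ) < F.G.card := by exact_mod_cast F.G_card_pos
  have hBposR : (0:ℝ) < F.B := by exact_mod_cast F.B_pos
  -- Ω nonempty
  have hΩ : Nonempty F.Ω := by
    by_contra h
    have h0 : F.Q Set.univ = 0 := by
      rw [Set.univ_eq_empty_iff.2 (not_nonempty_iff.1 h)]; exact measure_empty
    rw [measure_univ] at h0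
    exact one_ne_zero h0
  obtain ⟨w0⟩ := hΩ
  obtain ⟨j0, hj0⟩ := F.A_I ⟨0, F.B_pos⟩
  have hI : F.I.Nonempty := ⟨j0, (Finset.mem_inter.1 hj0).2⟩
  -- r > 0
  have hr : 0 < r := by
    have hs0 := F.p_mem j0 w0
    have hs0nn := (F.hS _ hs0).1
    have hpos : 0 < F.Pstar {w' | F.p j0 w' ≤ F.p j0 w0} w0 := by
      rw [Framework.Pstar]
      apply mul_pos (by positivity)
      refine Finset.sum_pos' (fun g _ => F.ind_nonneg _ _) ⟨_, F.G_one, ?_⟩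
      have : (MeasurableEquiv.refl F.Ω) w0 ∈ {w' | F.p j0 w' ≤ F.p j0 w0} := by simp
      rw [Set.indicator_of_mem this]; norm_num
    have h2 := (hB2 j0 _ hs0 w0).2
    by_contra hle
    push_neg at hle
    nlinarith
  -- oracle case analysis
  have hc_cases : (c ∈ F.S ∧ (F.Q {w | F.nullMin w ≤ c}).toReal ≤ α) ∨ c = 0 := by
    rcases (F.S.filter (fun s => (F.Q {w | F.nullMin w ≤ s}).toReal ≤ α)).eq_empty_or_nonempty
      with h | h
    · right; rw [hc_def, Framework.oracle, h]; rfl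
    · left
      obtain ⟨v, hv⟩ := Finset.max_of_nonempty h
      have hvm := Finset.mem_of_max hv
      have hcv : c = v := by rw [hc_def, Framework.oracle, hv]; rfl
      rw [hcv]
      simpa using Finset.mem_filter.1 hvm
  have hcnn : 0 ≤ c := by
    rcases hc_cases with ⟨hcS, _⟩ | h
    · exact (F.hS _ hcS).1
    · rw [h]
  -- key bound on the oracle threshold
  have hc_le : c ≤ r * L / F.B := by
    rcases hc_cases with ⟨hcS, hcα⟩ | hc0
    · -- measurability of sublevel sets
      have hset : ∀ (J : Finset (Fin m)) (hJ : J.Nonempty),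
          {w : F.Ω | F.fmin J w ≤ c} = ⋃ j ∈ J, {w | F.p j w ≤ c} := by
        intro J hJ; ext w
        simp only [Set.mem_setOf_eq, Set.mem_iUnion, F.fmin_le_iff hJ]
        tauto
      have hmeas : ∀ (J : Finset (Fin m)), J.Nonempty →
          MeasurableSet {w : F.Ω | F.fmin J w ≤ c} := by
        intro J hJ; rw [hset J hJ]
        exact Set.Finite.measurableSet_biUnion (J.finite_toSet)
          (fun j _ => measurableSet_le (F.p_meas j) measurable_const)
      -- independence of the block minima
      have hInd : iIndepFun
          (fun b : Fin F.B => F.blockMin b) F.Q := by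
        have h := hA1 _ F.G_one _ F.G_one
        simpa [min_self] using h
      -- nullMin vs blockMin
      have hnull_iff : ∀ w : F.Ω, (F.nullMin w ≤ c ↔ ∃ b : Fin F.B, F.blockMin b w ≤ c) := by
        intro w
        rw [Framework.nullMin, F.fmin_le_iff hI]
        constructor
        · rintro ⟨j, hjI, hjc⟩
          obtain ⟨b, hb⟩ := F.A_cover j
          exact ⟨b, (F.fmin_le_iff (F.A_I b)).2 ⟨j, Finset.mem_inter.2 ⟨hb, hjI⟩, hjc⟩⟩
        · rintro ⟨b, hb⟩
          obtain ⟨j, hj, hjc⟩ := (F.fmin_le_iff (F.A_I b)).1 hb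
          exact ⟨j, (Finset.mem_inter.1 hj).2, hjc⟩
      -- product formula
      have hprod : F.Q ({w | F.nullMin w ≤ c}ᶜ)
          = ∏ b : Fin F.B, F.Q ({w | F.blockMin b w ≤ c}ᶜ) := by
        have h := hInd.measure_inter_preimage_eq_mul Finset.univ
          (sets := fun _ => Set.Ioi c) (fun i _ => measurableSet_Ioi)
        have hseteq : (⋂ b ∈ Finset.univ, (fun w => F.blockMin b w) ⁻¹' Set.Ioi c)
            = {w | F.nullMin w ≤ c}ᶜ := by
          ext w
          simp only [Finset.mem_univ, Set.iInter_true, Set.mem_iInter, Set.mem_preimage,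
            Set.mem_Ioi, Set.mem_compl_iff, Set.mem_setOf_eq, hnull_iff w, not_exists, not_le,
            Set.iInter_coe_set]
        have hseteq2 : ∀ b : Fin F.B, (fun w => F.blockMin b w) ⁻¹' Set.Ioi c
            = {w | F.blockMin b w ≤ c}ᶜ := by
          intro b; ext w
          simp [Set.mem_preimage, not_le]
        rw [hseteq] at h
        rw [h]
        exact Finset.prod_congr rfl (fun b _ => by rw [hseteq2 b])
      -- real-valued quantities
      set πb : Fin F.B → ℝ := fun b => (F.Q {w | F.blockMin b w ≤ c}).toReal with hπ_def
      set qb : Fin F.B → ℝ := fun b => (F.Q ({w | F.blockMin b w ≤ c}ᶜ)).toReal with hq_def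
      have hmeasb : ∀ b : Fin F.B, MeasurableSet {w | F.blockMin b w ≤ c} :=
        fun b => hmeas _ (F.A_I b)
      have hmeasN : MeasurableSet {w | F.nullMin w ≤ c} := hmeas _ hI
      have hq_pi : ∀ b, qb b = 1 - πb b := by
        intro b
        rw [hq_def, hπ_def]
        simp only
        rw [prob_compl_eq_one_sub (hmeasb b), ENNReal.toReal_sub_of_le prob_le_one ENNReal.one_ne_top,
          ENNReal.toReal_one]
      have hπ01 : ∀ b, 0 ≤ πb b ∧ πb b ≤ 1 := by
        intro b
        refine ⟨ENNReal.toReal_nonneg, ?_⟩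
        rw [hπ_def]
        simpa using ENNReal.toReal_mono ENNReal.one_ne_top prob_le_one
      -- product lower bound
      have hqprod : 1 - α ≤ ∏ b : Fin F.B, qb b := by
        have h1 : (F.Q ({w | F.nullMin w ≤ c}ᶜ)).toReal = ∏ b : Fin F.B, qb b := by
          rw [hprod, ENNReal.toReal_prod]
        have h2 : (F.Q ({w | F.nullMin w ≤ c}ᶜ)).toReal
            = 1 - (F.Q {w | F.nullMin w ≤ c}).toReal := by
          rw [prob_compl_eq_one_sub hmeasN, ENNReal.toReal_sub_of_le prob_le_one ENNReal.one_ne_top,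
            ENNReal.toReal_one]
        rw [← h1, h2]
        linarith
      have hqb_pos : ∀ b, 0 < qb b := by
        intro b
        have h1 : ∏ b' : Fin F.B, qb b' ≤ qb b := by
          rw [← Finset.mul_prod_erase Finset.univ qb (Finset.mem_univ b)]
          have h2 : ∏ b' ∈ Finset.univ.erase b, qb b' ≤ 1 :=
            Finset.prod_le_one (fun b' _ => by rw [hq_pi]; linarith [(hπ01 b').2])
              (fun b' _ => by rw [hq_pi]; linarith [(hπ01 b').1])
          calc qb b * ∏ b' ∈ Finset.univ.erase b, qb b' ≤ qb b * 1 :=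
                mul_le_mul_of_nonneg_left h2 (by rw [hq_pi]; linarith [(hπ01 b).2])
            _ = qb b := mul_one _
        linarith
      -- sum bound
      have hsum : ∑ b : Fin F.B, πb b ≤ L := by
        have h1 : ∀ b : Fin F.B, πb b ≤ -(Real.log (qb b)) := by
          intro b
          have := Real.log_le_sub_one_of_pos (hqb_pos b)
          have h2 := hq_pi b
          linarith
        calc ∑ b : Fin F.B, πb b ≤ ∑ b : Fin F.B, -(Real.log (qb b)) :=
              Finset.sum_le_sum (fun b _ => h1 b)
          _ = -(Real.log (∏ b : Fin F.B, qb b)) := by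
              rw [Real.log_prod (fun b _ => (hqb_pos b).ne'), Finset.sum_neg_distrib]
          _ ≤ -(Real.log (1 - α)) := by
              have := Real.log_le_log h1α hqprod
              linarith
          _ = L := by
              rw [hL_def, Real.log_div one_ne_zero h1α.ne', Real.log_one]
              ring
      -- lower bound on each πb via (B1) and (B2)
      have hπ_lb : ∀ b : Fin F.B, r⁻¹ * c ≤ πb b := by
        intro b
        obtain ⟨j, hj⟩ := F.A_I b
        have hjI : j ∈ F.I := (Finset.mem_inter.1 hj).2
        have hrc_nn : 0 ≤ r⁻¹ * c := mul_nonneg (by positivity) hcnn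
        set j' : F.I := ⟨j, hjI⟩ with hj'_def
        set T : Set (F.I → ℝ) := {f | f j' ≤ c} with hT_def
        have hTm : MeasurableSet T := measurableSet_le (measurable_pi_apply j') measurable_const
        have hφ : ∀ g : F.Ω ≃ᵐ F.Ω, Measurable (fun w => fun i : F.I => F.p i (g w)) :=
          fun g => measurable_pi_lambda _ (fun i => (F.p_meas i).comp g.measurable)
        have hφid : Measurable (fun w => fun i : F.I => F.p i w) :=
          measurable_pi_lambda _ (fun i => F.p_meas i)
        have hmeasg : ∀ g : F.Ω ≃ᵐ F.Ω, MeasurableSet {w | F.p j ((g : F.Ω ≃ᵐ F.Ω) w) ≤ c} :=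
          fun g => measurableSet_le ((F.p_meas j).comp g.measurable) measurable_const
        -- apply B1 to the set T
        have hB1' := congrArg (fun μ : Measure (F.I → ℝ) => μ T) hB1
        simp only [Measure.smul_apply, Measure.coe_finset_sum, Finset.sum_apply,
          smul_eq_mul] at hB1'
        have hmapg : ∀ g ∈ F.G, (Measure.map (fun w => fun i : F.I => F.p i (g w)) F.Q) T
            = F.Q {w | F.p j (g w) ≤ c} := by
          intro g _
          rw [Measure.map_apply (hφ g) hTm]
          rfl
        have hmapid : (Measure.map (fun w => fun i : F.I => F.p i w) F.Q) T
            = F.Q {w | F.p j w ≤ c} := by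
          rw [Measure.map_apply hφid hTm]
          rfl
        rw [hmapid, Finset.sum_congr rfl hmapg] at hB1'
        -- lower bound on the sum of the measures
        have hsum_ge : (F.G.card : ℝ≥0∞) * ENNReal.ofReal (r⁻¹ * c)
            ≤ ∑ g ∈ F.G, F.Q {w | F.p j ((g : F.Ω ≃ᵐ F.Ω) w) ≤ c} := by
          have hpt : ∀ w : F.Ω, (F.G.card : ℝ≥0∞) * ENNReal.ofReal (r⁻¹ * c)
              ≤ ∑ g ∈ F.G, ({w' | F.p j ((g : F.Ω ≃ᵐ F.Ω) w') ≤ c}).indicator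
                  (fun _ => (1 : ℝ≥0∞)) w := by
            intro w
            have hreal : (F.G.card : ℝ) * (r⁻¹ * c)
                ≤ ∑ g ∈ F.G, ({w' | F.p j w' ≤ c}).indicator (fun _ => (1:ℝ)) (g w) := by
              have hb2 := (hB2 j c hcS w).1
              rw [Framework.Pstar] at hb2
              calc (F.G.card : ℝ) * (r⁻¹ * c)
                  ≤ (F.G.card : ℝ) * ((F.G.card : ℝ)⁻¹
                      * ∑ g ∈ F.G, ({w' | F.p j w' ≤ c}).indicator (fun _ => (1:ℝ)) (g w)) :=
                    mul_le_mul_of_nonneg_left hb2 hGpos.le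
                _ = ∑ g ∈ F.G, ({w' | F.p j w' ≤ c}).indicator (fun _ => (1:ℝ)) (g w) := by
                    rw [← mul_assoc, mul_inv_cancel₀ hGpos.ne', one_mul]
            have hconv : ∀ g : F.Ω ≃ᵐ F.Ω,
                ({w' | F.p j (g w') ≤ c}).indicator (fun _ => (1 : ℝ≥0∞)) w
                = ENNReal.ofReal (({w' | F.p j w' ≤ c}).indicator (fun _ => (1:ℝ)) (g w)) := by
              intro g
              by_cases hx : F.p j (g w) ≤ c <;>
                simp [Set.indicator_apply, hx, Set.mem_setOf_eq]
            calc (F.G.card : ℝ≥0∞) * ENNReal.ofReal (r⁻¹ * c)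
                = ENNReal.ofReal ((F.G.card : ℝ) * (r⁻¹ * c)) := by
                  rw [ENNReal.ofReal_mul (Nat.cast_nonneg F.G.card), ENNReal.ofReal_natCast]
              _ ≤ ENNReal.ofReal
                    (∑ g ∈ F.G, ({w' | F.p j w' ≤ c}).indicator (fun _ => (1:ℝ)) (g w)) :=
                  ENNReal.ofReal_le_ofReal hreal
              _ = ∑ g ∈ F.G, ENNReal.ofReal
                    (({w' | F.p j w' ≤ c}).indicator (fun _ => (1:ℝ)) (g w)) :=
                  ENNReal.ofReal_sum_of_nonneg (fun g _ => F.ind_nonneg _ _)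
              _ = ∑ g ∈ F.G, ({w' | F.p j ((g : F.Ω ≃ᵐ F.Ω) w') ≤ c}).indicator
                    (fun _ => (1 : ℝ≥0∞)) w := by
                  exact Finset.sum_congr rfl (fun g _ => (hconv g).symm)
          calc (F.G.card : ℝ≥0∞) * ENNReal.ofReal (r⁻¹ * c)
              = ∫⁻ _, ((F.G.card : ℝ≥0∞) * ENNReal.ofReal (r⁻¹ * c)) ∂F.Q := by
                rw [lintegral_const, measure_univ, mul_one]
            _ ≤ ∫⁻ w, ∑ g ∈ F.G, ({w' | F.p j ((g : F.Ω ≃ᵐ F.Ω) w') ≤ c}).indicator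
                  (fun _ => (1 : ℝ≥0∞)) w ∂F.Q := lintegral_mono hpt
            _ = ∑ g ∈ F.G, ∫⁻ w, ({w' | F.p j ((g : F.Ω ≃ᵐ F.Ω) w') ≤ c}).indicator
                  (fun _ => (1 : ℝ≥0∞)) w ∂F.Q :=
                lintegral_finset_sum _ (fun g _ => measurable_const.indicator (hmeasg g))
            _ = ∑ g ∈ F.G, F.Q {w | F.p j ((g : F.Ω ≃ᵐ F.Ω) w) ≤ c} :=
                Finset.sum_congr rfl (fun g _ => lintegral_indicator_one (hmeasg g))
        -- combine
        have hkey : ENNReal.ofReal (r⁻¹ * c) ≤ F.Q {w | F.p j w ≤ c} := by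
          rw [← hB1']
          calc ENNReal.ofReal (r⁻¹ * c)
              = (F.G.card : ℝ≥0∞)⁻¹ * ((F.G.card : ℝ≥0∞) * ENNReal.ofReal (r⁻¹ * c)) := by
                rw [← mul_assoc, ENNReal.inv_mul_cancel (by exact_mod_cast F.G_card_pos.ne')
                  (ENNReal.natCast_ne_top _), one_mul]
            _ ≤ (F.G.card : ℝ≥0∞)⁻¹ * ∑ g ∈ F.G, F.Q {w | F.p j ((g : F.Ω ≃ᵐ F.Ω) w) ≤ c} :=
                mul_le_mul_right hsum_ge _
        have hmono : F.Q {w | F.p j w ≤ c} ≤ F.Q {w | F.blockMin b w ≤ c} :=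
          measure_mono (fun w hw => (F.fmin_le_iff (F.A_I b)).2 ⟨j, hj, hw⟩)
        calc r⁻¹ * c = (ENNReal.ofReal (r⁻¹ * c)).toReal := (ENNReal.toReal_ofReal hrc_nn).symm
          _ ≤ (F.Q {w | F.blockMin b w ≤ c}).toReal :=
              ENNReal.toReal_mono (measure_ne_top _ _) (hkey.trans hmono)
      -- conclude
      have hBsum : (F.B : ℝ) * (r⁻¹ * c) ≤ L := by
        calc (F.B : ℝ) * (r⁻¹ * c) = ∑ _b : Fin F.B, (r⁻¹ * c) := by
              simp [Finset.sum_const, mul_comm]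
          _ ≤ ∑ b : Fin F.B, πb b := Finset.sum_le_sum (fun b _ => hπ_lb b)
          _ ≤ L := hsum
      have h2 : r⁻¹ * c ≤ L / F.B := by
        rw [le_div_iff₀ hBposR]; linarith
      calc c = r * (r⁻¹ * c) := by field_simp
        _ ≤ r * (L / F.B) := mul_le_mul_of_nonneg_left h2 hr.le
        _ = r * L / F.B := by ring
    · rw [hc0]; positivity
  -- main conclusion
  intro b w
  have hub : F.Pstar {w' | c < F.blockMin b w'} w ≤ 1 := F.Pstar_le_one _ w
  refine ⟨?_, hub⟩
  have hcompl : {w' | c < F.blockMin b w'} = {w' | F.blockMin b w' ≤ c}ᶜ := by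
    ext w'
    simp [not_le]
  rw [hcompl, F.Pstar_compl]
  have hmB0 : (0:ℝ) ≤ (F.mB : ℝ) := Nat.cast_nonneg _
  have hcard : ((F.A b ∩ F.I).card : ℝ) ≤ (F.mB : ℝ) := by
    have h1 : (F.A b ∩ F.I).card ≤ (F.A b).card := Finset.card_le_card Finset.inter_subset_left
    have h2 : (F.A b).card ≤ F.mB :=
      Finset.le_sup (f := fun b : Fin F.B => (F.A b).card) (Finset.mem_univ b)
    exact_mod_cast h1.trans h2
  have hkey : F.Pstar {w' | F.blockMin b w' ≤ c} w ≤ (F.mB : ℝ) * (r * c) := by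
    by_cases hcS : c ∈ F.S
    · -- subadditivity plus (B2)
      have hpt : ∀ x : F.Ω, ({w' | F.blockMin b w' ≤ c}).indicator (fun _ => (1:ℝ)) x
          ≤ ∑ j ∈ F.A b ∩ F.I, ({w' | F.p j w' ≤ c}).indicator (fun _ => (1:ℝ)) x := by
        intro x
        by_cases hx : F.blockMin b x ≤ c
        · obtain ⟨j, hjmem, hjle⟩ := (F.fmin_le_iff (F.A_I b)).1 hx
          have h1 : ({w' | F.blockMin b w' ≤ c}).indicator (fun _ => (1:ℝ)) x = 1 := by
            simp [Set.indicator_apply, hx]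
          have h2 : (1:ℝ) ≤ ∑ j ∈ F.A b ∩ F.I,
              ({w' | F.p j w' ≤ c}).indicator (fun _ => (1:ℝ)) x := by
            have h3 := Finset.single_le_sum
              (f := fun j => ({w' | F.p j w' ≤ c}).indicator (fun _ => (1:ℝ)) x)
              (fun j _ => F.ind_nonneg _ _) hjmem
            have h4 : ({w' | F.p j w' ≤ c}).indicator (fun _ => (1:ℝ)) x = 1 := by
              simp [Set.indicator_apply, hjle]
            linarith
          linarith [h1, h2]
        · have h1 : ({w' | F.blockMin b w' ≤ c}).indicator (fun _ => (1:ℝ)) x = 0 := by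
            simp [Set.indicator_apply, hx]
          rw [h1]
          exact Finset.sum_nonneg fun j _ => F.ind_nonneg _ _
      have hsub : F.Pstar {w' | F.blockMin b w' ≤ c} w
          ≤ ∑ j ∈ F.A b ∩ F.I, F.Pstar {w' | F.p j w' ≤ c} w := by
        have h1 : ∑ j ∈ F.A b ∩ F.I, F.Pstar {w' | F.p j w' ≤ c} w
            = (F.G.card:ℝ)⁻¹ * ∑ g ∈ F.G, ∑ j ∈ F.A b ∩ F.I,
                ({w' | F.p j w' ≤ c}).indicator (fun _ => (1:ℝ)) (g w) := by
          simp only [Framework.Pstar, ← Finset.mul_sum]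
          rw [Finset.sum_comm]
        rw [h1, Framework.Pstar]
        exact mul_le_mul_of_nonneg_left
          (Finset.sum_le_sum fun g _ => hpt (g w)) (by positivity)
      calc F.Pstar {w' | F.blockMin b w' ≤ c} w
          ≤ ∑ j ∈ F.A b ∩ F.I, F.Pstar {w' | F.p j w' ≤ c} w := hsub
        _ ≤ ∑ _j ∈ F.A b ∩ F.I, (r * c) :=
            Finset.sum_le_sum fun j _ => (hB2 j c hcS w).2
        _ = ((F.A b ∩ F.I).card : ℝ) * (r * c) := by
            rw [Finset.sum_const, nsmul_eq_mul]
        _ ≤ (F.mB : ℝ) * (r * c) :=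
            mul_le_mul_of_nonneg_right hcard (by positivity)
    · -- c = 0 and 0 ∉ S : the event is empty
      have hc0 : c = 0 := by
        rcases hc_cases with ⟨h, _⟩ | h
        · exact absurd h hcS
        · exact h
      have hempty : {w' | F.blockMin b w' ≤ c} = (∅ : Set F.Ω) := by
        ext w'
        simp only [Set.mem_setOf_eq, Set.mem_empty_iff_false, iff_false, not_le, hc0]
        have hmem := F.fmin_mem (F.A_I b) w'
        have hnn := (F.hS _ hmem).1
        rcases lt_or_eq_of_le hnn with h | h
        · exact h
        · exact absurd (h ▸ hmem) (hc0 ▸ hcS)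
      rw [hempty]
      have : F.Pstar (∅ : Set F.Ω) w = 0 := by
        simp [Framework.Pstar]
      rw [this, hc0, mul_zero, mul_zero]
  -- finish with arithmetic
  have hrc : r * c ≤ r * (r * L / F.B) := mul_le_mul_of_nonneg_left hc_le hr.le
  have h5 : F.Pstar {w' | F.blockMin b w' ≤ c} w ≤ L * r ^ 2 * (F.mB : ℝ) / (F.B : ℝ) := by
    calc F.Pstar {w' | F.blockMin b w' ≤ c} w ≤ (F.mB : ℝ) * (r * c) := hkey
      _ ≤ (F.mB : ℝ) * (r * (r * L / F.B)) := mul_le_mul_of_nonneg_left hrc hmB0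
      _ = L * r ^ 2 * (F.mB : ℝ) / (F.B : ℝ) := by ring
  linarith
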